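/- Let A = R_P[x1,x2; σ, δ, τ] be a right double Ore extension of a K-algebra R, so that for each r ∈ R one has x1·r = σ11(r)x1 + σ12(r)x2 + δ1(r) and x2·r = σ21(r)x1 + σ22(r)x2 + δ2(r) with uniquely determined coefficients in R. Then the map σ : R → M₂(R) sending r to the 2×2 matrix (σij(r)) is a K-algebra homomorphism. -/
import Mathlib


/-- A right double Ore extension `A = R_P[x1,x2; σ, δ, τ]` of a `K`-algebra `R`. -/
structure RightDOE (K R A : Type*) [Field K] [Ring R] [Algebra K R]
    [Ring A] [Algebra K A] where
  ι : R →ₐ[K] A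
  inj : Function.Injective ι
  x1 : A
  x2 : A
  p12 : K
  p11 : K
  τ0 : R
  τ1 : R
  τ2 : R
  σ11 : R → R
  σ12 : R → R
  σ21 : R → R
  σ22 : R → R
  δ1 : R → R
  δ2 : R → R
  gen : Algebra.adjoin K (Set.range ι ∪ {x1, x2}) = ⊤
  basis : ∀ a : A, ∃! c : (ℕ × ℕ) →₀ R,
      a = c.sum fun p r => ι r * (x1 ^ p.1 * x2 ^ p.2)
  rel : x2 * x1 = p12 • (x1 * x2) + p11 • (x1 * x1) + ι τ1 * x1 + ι τ2 * x2 + ι τ0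
  comm1 : ∀ r : R, x1 * ι r = ι (σ11 r) * x1 + ι (σ12 r) * x2 + ι (δ1 r)
  comm2 : ∀ r : R, x2 * ι r = ι (σ21 r) * x1 + ι (σ22 r) * x2 + ι (δ2 r)

/-- A (two-sided) double Ore extension: also a left double Ore extension on the same
generators. -/
structure DOE (K R A : Type*) [Field K] [Ring R] [Algebra K R]
    [Ring A] [Algebra K A] extends RightDOE K R A where
  basisR : ∀ a : A, ∃! c : (ℕ × ℕ) →₀ R,
      a = c.sum fun p r => (x1 ^ p.1 * x2 ^ p.2) * ι r
  p12' : K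
  p11' : K
  τ0' : R
  τ1' : R
  τ2' : R
  relL : x1 * x2 = p12' • (x2 * x1) + p11' • (x1 * x1) + x1 * ι τ1' + x2 * ι τ2' + ι τ0'

/-- A skew PBW extension `A = σ(R)⟨x1, x2⟩` in two variables. -/
structure SkewPBW2 (K R A : Type*) [Field K] [Ring R] [Algebra K R]
    [Ring A] [Algebra K A] where
  ι : R →ₐ[K] A
  inj : Function.Injective ι
  x1 : A
  x2 : A
  σ1 : R → R
  σ2 : R → R
  δ1 : R → R
  δ2 : R → R
  σ1_ne : ∀ r : R, r ≠ 0 → σ1 r ≠ 0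
  σ2_ne : ∀ r : R, r ≠ 0 → σ2 r ≠ 0
  c12 : R
  c12_ne : c12 ≠ 0
  τ0 : R
  τ1 : R
  τ2 : R
  basis : ∀ a : A, ∃! c : (ℕ × ℕ) →₀ R,
      a = c.sum fun p r => ι r * (x1 ^ p.1 * x2 ^ p.2)
  comm1 : ∀ r : R, x1 * ι r = ι (σ1 r) * x1 + ι (δ1 r)
  comm2 : ∀ r : R, x2 * ι r = ι (σ2 r) * x2 + ι (δ2 r)
  rel : x2 * x1 = ι c12 * (x1 * x2) + ι τ1 * x1 + ι τ2 * x2 + ι τ0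

/-- A skew PBW extension in two variables is quasi-commutative when the derivations
and the tails vanish. -/
def SkewPBW2.QuasiCommutative {K R A : Type*} [Field K] [Ring R] [Algebra K R]
    [Ring A] [Algebra K A] (S : SkewPBW2 K R A) : Prop :=
  (∀ r : R, S.δ1 r = 0) ∧ (∀ r : R, S.δ2 r = 0) ∧ S.τ0 = 0 ∧ S.τ1 = 0 ∧ S.τ2 = 0

/-- A graded skew PBW extension of an ℕ-graded algebra `R` with grading `ℛ`,
the grading on `A` being `𝒜` with `deg x1 = deg x2 = 1`. -/
structure GradedSkewPBW2 (K R A : Type*) [Field K] [Ring R] [Algebra K R]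
    [Ring A] [Algebra K A] (ℛ : ℕ → Submodule K R) (𝒜 : ℕ → Submodule K A)
    extends SkewPBW2 K R A where
  σ1_bij : Function.Bijective σ1
  σ2_bij : Function.Bijective σ2
  σ1_graded : ∀ m : ℕ, ∀ r ∈ ℛ m, σ1 r ∈ ℛ m
  σ2_graded : ∀ m : ℕ, ∀ r ∈ ℛ m, σ2 r ∈ ℛ m
  δ1_graded : ∀ m : ℕ, ∀ r ∈ ℛ m, δ1 r ∈ ℛ (m + 1)
  δ2_graded : ∀ m : ℕ, ∀ r ∈ ℛ m, δ2 r ∈ ℛ (m + 1)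
  c12_mem : c12 ∈ ℛ 0
  τ1_mem : τ1 ∈ ℛ 1
  τ2_mem : τ2 ∈ ℛ 1
  τ0_mem : τ0 ∈ ℛ 2
  x1_mem : x1 ∈ 𝒜 1
  x2_mem : x2 ∈ 𝒜 1
  ι_graded : ∀ m : ℕ, ∀ r ∈ ℛ m, ι r ∈ 𝒜 m
  grading_eq : ∀ p : ℕ, 𝒜 p = Submodule.span K
      {a | ∃ t i j : ℕ, ∃ r ∈ ℛ t, t + i + j = p ∧ a = ι r * (x1 ^ i * x2 ^ j)}

/-- A graded right double Ore extension, with all defining relations homogeneous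
for `deg x1 = deg x2 = 1`. -/
structure GradedRightDOE (K R A : Type*) [Field K] [Ring R] [Algebra K R]
    [Ring A] [Algebra K A] (ℛ : ℕ → Submodule K R) (𝒜 : ℕ → Submodule K A)
    extends RightDOE K R A where
  σ11_graded : ∀ m : ℕ, ∀ r ∈ ℛ m, σ11 r ∈ ℛ m
  σ12_graded : ∀ m : ℕ, ∀ r ∈ ℛ m, σ12 r ∈ ℛ m
  σ21_graded : ∀ m : ℕ, ∀ r ∈ ℛ m, σ21 r ∈ ℛ m
  σ22_graded : ∀ m : ℕ, ∀ r ∈ ℛ m, σ22 r ∈ ℛ m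
  δ1_graded : ∀ m : ℕ, ∀ r ∈ ℛ m, δ1 r ∈ ℛ (m + 1)
  δ2_graded : ∀ m : ℕ, ∀ r ∈ ℛ m, δ2 r ∈ ℛ (m + 1)
  τ1_mem : τ1 ∈ ℛ 1
  τ2_mem : τ2 ∈ ℛ 1
  τ0_mem : τ0 ∈ ℛ 2
  x1_mem : x1 ∈ 𝒜 1
  x2_mem : x2 ∈ 𝒜 1
  ι_graded : ∀ m : ℕ, ∀ r ∈ ℛ m, ι r ∈ 𝒜 m
  grading_eq : ∀ p : ℕ, 𝒜 p = Submodule.span K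
      {a | ∃ t i j : ℕ, ∃ r ∈ ℛ t, t + i + j = p ∧ a = ι r * (x1 ^ i * x2 ^ j)}

/-- A graded right double Ore extension is trimmed when δ and the tail vanish. -/
def GradedRightDOE.Trimmed {K R A : Type*} [Field K] [Ring R] [Algebra K R]
    [Ring A] [Algebra K A] {ℛ : ℕ → Submodule K R} {𝒜 : ℕ → Submodule K A}
    (D : GradedRightDOE K R A ℛ 𝒜) : Prop :=
  (∀ r : R, D.δ1 r = 0) ∧ (∀ r : R, D.δ2 r = 0) ∧ D.τ0 = 0 ∧ D.τ1 = 0 ∧ D.τ2 = 0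

/-- A graded (two-sided) double Ore extension. -/
structure GradedDOE (K R A : Type*) [Field K] [Ring R] [Algebra K R]
    [Ring A] [Algebra K A] (ℛ : ℕ → Submodule K R) (𝒜 : ℕ → Submodule K A)
    extends GradedRightDOE K R A ℛ 𝒜 where
  basisR : ∀ a : A, ∃! c : (ℕ × ℕ) →₀ R,
      a = c.sum fun p r => (x1 ^ p.1 * x2 ^ p.2) * ι r
  p12' : K
  p11' : K
  τ0' : R
  τ1' : R
  τ2' : R
  relL : x1 * x2 = p12' • (x2 * x1) + p11' • (x1 * x1) + x1 * ι τ1' + x2 * ι τ2' + ι τ0'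

/-- A graded algebra is connected when its degree zero part is the base field. -/
def GradingConnected {K B : Type*} [Field K] [Ring B] [Algebra K B]
    (𝒜 : ℕ → Submodule K B) : Prop :=
  𝒜 0 = Submodule.span K ({1} : Set B)

namespace RightDOE
variable {K R A : Type*} [Field K] [Ring R] [Algebra K R] [Ring A] [Algebra K A]
  (D : RightDOE K R A)

lemma sum_eval (a b c : R) :
    (Finsupp.single ((1:ℕ),(0:ℕ)) a + Finsupp.single (0,1) b + Finsupp.single (0,0) c).sum
      (fun p r => D.ι r * (D.x1 ^ p.1 * D.x2 ^ p.2))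
    = D.ι a * D.x1 + D.ι b * D.x2 + D.ι c := by
  rw [Finsupp.sum_add_index' (by simp) (by intros; simp [add_mul]),
      Finsupp.sum_add_index' (by simp) (by intros; simp [add_mul]),
      Finsupp.sum_single_index (by simp), Finsupp.sum_single_index (by simp),
      Finsupp.sum_single_index (by simp)]
  simp

lemma key {a b c a' b' c' : R}
    (h : D.ι a * D.x1 + D.ι b * D.x2 + D.ι c
       = D.ι a' * D.x1 + D.ι b' * D.x2 + D.ι c') :
    a = a' ∧ b = b' ∧ c = c' := by
  obtain ⟨cc, -, huniq⟩ := D.basis (D.ι a * D.x1 + D.ι b * D.x2 + D.ι c)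
  have h1 := huniq _ (D.sum_eval a b c).symm
  have h2 := huniq _ (by rw [h]; exact (D.sum_eval a' b' c').symm)
  have h3 := h1.trans h2.symm
  refine ⟨?_, ?_, ?_⟩
  · have := DFunLike.congr_fun h3 ((1:ℕ),(0:ℕ))
    simpa [Finsupp.single_apply, Prod.ext_iff] using this
  · have := DFunLike.congr_fun h3 ((0:ℕ),(1:ℕ))
    simpa [Finsupp.single_apply, Prod.ext_iff] using this
  · have := DFunLike.congr_fun h3 ((0:ℕ),(0:ℕ))
    simpa [Finsupp.single_apply, Prod.ext_iff] using this

lemma row1_mul (r s : R) :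
    D.σ11 (r*s) = D.σ11 r * D.σ11 s + D.σ12 r * D.σ21 s ∧
    D.σ12 (r*s) = D.σ11 r * D.σ12 s + D.σ12 r * D.σ22 s := by
  have h : D.x1 * D.ι (r*s)
      = D.ι (D.σ11 r * D.σ11 s + D.σ12 r * D.σ21 s) * D.x1
      + D.ι (D.σ11 r * D.σ12 s + D.σ12 r * D.σ22 s) * D.x2
      + D.ι (D.σ11 r * D.δ1 s + D.σ12 r * D.δ2 s + D.δ1 r * s) := by
    rw [map_mul, ← mul_assoc, D.comm1 r, add_mul, add_mul, mul_assoc, mul_assoc,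
      D.comm1 s, D.comm2 s]
    simp only [map_add, map_mul]
    noncomm_ring
  obtain ⟨h1, h2, -⟩ := D.key ((D.comm1 (r*s)).symm.trans h)
  exact ⟨h1, h2⟩

lemma row2_mul (r s : R) :
    D.σ21 (r*s) = D.σ21 r * D.σ11 s + D.σ22 r * D.σ21 s ∧
    D.σ22 (r*s) = D.σ21 r * D.σ12 s + D.σ22 r * D.σ22 s := by
  have h : D.x2 * D.ι (r*s)
      = D.ι (D.σ21 r * D.σ11 s + D.σ22 r * D.σ21 s) * D.x1
      + D.ι (D.σ21 r * D.σ12 s + D.σ22 r * D.σ22 s) * D.x2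
      + D.ι (D.σ21 r * D.δ1 s + D.σ22 r * D.δ2 s + D.δ2 r * s) := by
    rw [map_mul, ← mul_assoc, D.comm2 r, add_mul, add_mul, mul_assoc, mul_assoc,
      D.comm1 s, D.comm2 s]
    simp only [map_add, map_mul]
    noncomm_ring
  obtain ⟨h1, h2, -⟩ := D.key ((D.comm2 (r*s)).symm.trans h)
  exact ⟨h1, h2⟩

lemma row1_add (r s : R) :
    D.σ11 (r+s) = D.σ11 r + D.σ11 s ∧ D.σ12 (r+s) = D.σ12 r + D.σ12 s := by
  have h : D.x1 * D.ι (r+s)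
      = D.ι (D.σ11 r + D.σ11 s) * D.x1 + D.ι (D.σ12 r + D.σ12 s) * D.x2
      + D.ι (D.δ1 r + D.δ1 s) := by
    rw [map_add, mul_add, D.comm1 r, D.comm1 s]
    simp only [map_add]
    noncomm_ring
  obtain ⟨h1, h2, -⟩ := D.key ((D.comm1 (r+s)).symm.trans h)
  exact ⟨h1, h2⟩

lemma row2_add (r s : R) :
    D.σ21 (r+s) = D.σ21 r + D.σ21 s ∧ D.σ22 (r+s) = D.σ22 r + D.σ22 s := by
  have h : D.x2 * D.ι (r+s)
      = D.ι (D.σ21 r + D.σ21 s) * D.x1 + D.ι (D.σ22 r + D.σ22 s) * D.x2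
      + D.ι (D.δ2 r + D.δ2 s) := by
    rw [map_add, mul_add, D.comm2 r, D.comm2 s]
    simp only [map_add]
    noncomm_ring
  obtain ⟨h1, h2, -⟩ := D.key ((D.comm2 (r+s)).symm.trans h)
  exact ⟨h1, h2⟩

lemma row1_one : D.σ11 1 = 1 ∧ D.σ12 1 = 0 := by
  have h : D.x1 * D.ι 1 = D.ι 1 * D.x1 + D.ι 0 * D.x2 + D.ι 0 := by simp
  obtain ⟨h1, h2, -⟩ := D.key ((D.comm1 1).symm.trans h)
  exact ⟨h1, h2⟩

lemma row2_one : D.σ21 1 = 0 ∧ D.σ22 1 = 1 := by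
  have h : D.x2 * D.ι 1 = D.ι 0 * D.x1 + D.ι 1 * D.x2 + D.ι 0 := by simp
  obtain ⟨h1, h2, -⟩ := D.key ((D.comm2 1).symm.trans h)
  exact ⟨h1, h2⟩

lemma row1_smul (k : K) (r : R) :
    D.σ11 (k • r) = k • D.σ11 r ∧ D.σ12 (k • r) = k • D.σ12 r := by
  have h : D.x1 * D.ι (k • r)
      = D.ι (k • D.σ11 r) * D.x1 + D.ι (k • D.σ12 r) * D.x2 + D.ι (k • D.δ1 r) := by
    rw [map_smul, mul_smul_comm, D.comm1 r, map_smul, map_smul, map_smul]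
    rw [smul_add, smul_add, smul_mul_assoc, smul_mul_assoc]
  obtain ⟨h1, h2, -⟩ := D.key ((D.comm1 (k • r)).symm.trans h)
  exact ⟨h1, h2⟩

lemma row2_smul (k : K) (r : R) :
    D.σ21 (k • r) = k • D.σ21 r ∧ D.σ22 (k • r) = k • D.σ22 r := by
  have h : D.x2 * D.ι (k • r)
      = D.ι (k • D.σ21 r) * D.x1 + D.ι (k • D.σ22 r) * D.x2 + D.ι (k • D.δ2 r) := by
    rw [map_smul, mul_smul_comm, D.comm2 r, map_smul, map_smul, map_smul]
    rw [smul_add, smul_add, smul_mul_assoc, smul_mul_assoc]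
  obtain ⟨h1, h2, -⟩ := D.key ((D.comm2 (k • r)).symm.trans h)
  exact ⟨h1, h2⟩

lemma alg_commutes (k : K) :
    (!![D.σ11 (algebraMap K R k), D.σ12 (algebraMap K R k);
        D.σ21 (algebraMap K R k), D.σ22 (algebraMap K R k)] :
      Matrix (Fin 2) (Fin 2) R)
    = algebraMap K (Matrix (Fin 2) (Fin 2) R) k := by
  have e1 : algebraMap K R k = k • (1 : R) := Algebra.algebraMap_eq_smul_one k
  have s1 : D.σ11 (algebraMap K R k) = algebraMap K R k := by
    rw [e1, (D.row1_smul k 1).1, D.row1_one.1]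
  have s2 : D.σ12 (algebraMap K R k) = 0 := by
    rw [e1, (D.row1_smul k 1).2, D.row1_one.2, smul_zero]
  have s3 : D.σ21 (algebraMap K R k) = 0 := by
    rw [e1, (D.row2_smul k 1).1, D.row2_one.1, smul_zero]
  have s4 : D.σ22 (algebraMap K R k) = algebraMap K R k := by
    rw [e1, (D.row2_smul k 1).2, D.row2_one.2]
  rw [Matrix.algebraMap_eq_diagonal]
  ext i j
  fin_cases i <;> fin_cases j <;>
    simp [s1, s2, s3, s4, Matrix.diagonal_apply, Pi.algebraMap_apply]

end RightDOE

/-- the coefficient maps of a right double Ore extension assemble into a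
`K`-algebra homomorphism `σ : R → M₂(R)`. -/
theorem stmt_0 {K R A : Type*} [Field K] [Ring R] [Algebra K R] [Ring A] [Algebra K A]
    (D : RightDOE K R A) :
    ∃ f : R →ₐ[K] Matrix (Fin 2) (Fin 2) R,
      ∀ r : R, f r = !![D.σ11 r, D.σ12 r; D.σ21 r, D.σ22 r] := by
  refine ⟨{ toFun := fun r => !![D.σ11 r, D.σ12 r; D.σ21 r, D.σ22 r]
            map_one' := ?_
            map_mul' := ?_
            map_zero' := ?_
            map_add' := ?_
            commutes' := ?_ }, fun r => rfl⟩
  · ext i j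
    fin_cases i <;> fin_cases j <;>
      simp [D.row1_one.1, D.row1_one.2, D.row2_one.1, D.row2_one.2, Matrix.one_apply]
  · intro r s
    ext i j
    fin_cases i <;> fin_cases j <;>
      simp [Matrix.mul_apply, Fin.sum_univ_two, (D.row1_mul r s).1, (D.row1_mul r s).2,
        (D.row2_mul r s).1, (D.row2_mul r s).2]
  · have a1 := (D.row1_add 0 0).1; have a2 := (D.row1_add 0 0).2
    have a3 := (D.row2_add 0 0).1; have a4 := (D.row2_add 0 0).2
    rw [add_zero] at a1 a2 a3 a4
    have z1 : D.σ11 0 = 0 := left_eq_add.mp a1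
    have z2 : D.σ12 0 = 0 := left_eq_add.mp a2
    have z3 : D.σ21 0 = 0 := left_eq_add.mp a3
    have z4 : D.σ22 0 = 0 := left_eq_add.mp a4
    ext i j
    fin_cases i <;> fin_cases j <;> simp [z1, z2, z3, z4]
  · intro r s
    ext i j
    fin_cases i <;> fin_cases j <;>
      simp [(D.row1_add r s).1, (D.row1_add r s).2, (D.row2_add r s).1, (D.row2_add r s).2]
  · intro k
    exact D.alg_commutes k
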